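/- Let F be a topological space (e.g. a closed manifold) and let h : F × ℝ → F × ℝ be a bounded homeomorphism (meaning there is c > 0 with |pr_ℝ(h(x,t)) - t| ≤ c for all (x,t)) such that h is the identity on F × (-∞, 0]. Then h is boundedly isotopic to the identity of F × ℝ: there is a homotopy H : (F × ℝ) × [0,1] → F × ℝ through homeomorphisms with H₀ = h, H₁ = id, and with a uniform bound on |pr_ℝ(H_s(x,t)) - t| independent of s. Explicitly, with θ_s(t) = t - s/(s-1) for 0 ≤ s < 1, the family H_s = (id_F × θ_s)⁻¹ ∘ h ∘ (id_F × θ_s) for s < 1, H₁ = id, is continuous and works. -/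

import Mathlib

open Topology Set unitInterval

/-- Lemma 8.3 (Alexander trick): a bounded self-homeomorphism of `F × ℝ`
which is the identity on `F × (-∞, 0]` is boundedly isotopic to the
identity. -/
theorem bounded_homeo_identity_on_negatives_boundedly_isotopic_to_id
    {F : Type*} [TopologicalSpace F] (h : F × ℝ ≃ₜ F × ℝ)
    (hbdd : ∃ c : ℝ, 0 < c ∧ ∀ z : F × ℝ, |(h z).2 - z.2| ≤ c)
    (hid : ∀ (x : F) (t : ℝ), t ≤ 0 → h (x, t) = (x, t)) :
    ∃ H : (F × ℝ) × unitInterval → F × ℝ,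
      Continuous H ∧
      (∀ s : unitInterval, ∃ e : F × ℝ ≃ₜ F × ℝ, ∀ z, H (z, s) = e z) ∧
      (∀ z : F × ℝ, H (z, 0) = h z) ∧
      (∀ z : F × ℝ, H (z, 1) = z) ∧
      ∃ c : ℝ, ∀ (z : F × ℝ) (s : unitInterval), |(H (z, s)).2 - z.2| ≤ c := by
  obtain ⟨c, hc, hbc⟩ := hbdd
  set A : unitInterval → ℝ := fun s => s.1 / (1 - s.1) with hAdef
  set H : (F × ℝ) × unitInterval → F × ℝ := fun p =>
    if p.2.1 = 1 then p.1
    else ((h (p.1.1, p.1.2 - A p.2)).1, (h (p.1.1, p.1.2 - A p.2)).2 + A p.2) with hHdef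
  -- value of A at 0
  have hA0 : A 0 = 0 := by simp [hAdef]
  refine ⟨H, ?_, ?_, ?_, ?_, ⟨c, ?_⟩⟩
  · -- continuity
    rw [continuous_iff_continuousAt]
    rintro ⟨⟨x₀, t₀⟩, s₀⟩
    by_cases hs : s₀.1 = 1
    · -- near s = 1, H is locally the first projection
      set U : Set ((F × ℝ) × unitInterval) :=
        {p | p.1.2 < t₀ + 1 ∧ (t₀ + 1) * (1 - p.2.1) < p.2.1} with hU
      have hopen : IsOpen U := by
        apply IsOpen.inter
        · exact isOpen_lt (continuous_snd.comp continuous_fst) continuous_const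
        · exact isOpen_lt (continuous_const.mul
            (continuous_const.sub (continuous_subtype_val.comp continuous_snd)))
            (continuous_subtype_val.comp continuous_snd)
      have hmem : (⟨⟨x₀, t₀⟩, s₀⟩ : (F × ℝ) × unitInterval) ∈ U := by
        constructor
        · exact lt_add_one t₀
        · simp only [hs]; norm_num
      have heq : ∀ p ∈ U, p.1 = H p := by
        rintro ⟨⟨x, t⟩, s⟩ ⟨h1, h2⟩
        by_cases hs1 : s.1 = 1
        · simp only [hHdef]; rw [if_pos hs1]
        · have hlt : s.1 < 1 := lt_of_le_of_ne s.2.2 hs1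
          have hpos : (0:ℝ) < 1 - s.1 := by linarith
          have hAgt : t₀ + 1 < A s := by
            rw [hAdef]
            rw [lt_div_iff₀ hpos]
            linarith [h2]
          have hneg : t - A s ≤ 0 := by
            simp only at h1
            linarith
          simp only [hHdef, hs1, if_false]
          rw [hid x (t - A s) hneg]
          simp
      have hev : (fun p : (F × ℝ) × unitInterval => p.1) =ᶠ[𝓝 (⟨⟨x₀, t₀⟩, s₀⟩ : (F × ℝ) × unitInterval)] H :=
        Filter.eventuallyEq_of_mem (hopen.mem_nhds hmem) heq
      exact (continuousAt_fst).congr hev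
    · -- near s < 1, H is locally the conjugated map
      have hlt : s₀.1 < 1 := lt_of_le_of_ne s₀.2.2 hs
      set G : (F × ℝ) × unitInterval → F × ℝ := fun p =>
        ((h (p.1.1, p.1.2 - A p.2)).1, (h (p.1.1, p.1.2 - A p.2)).2 + A p.2) with hG
      have hAcont : ContinuousAt A s₀ := by
        apply ContinuousAt.div
        · exact continuous_subtype_val.continuousAt
        · exact (continuous_const.sub continuous_subtype_val).continuousAt
        · intro hz; linarith [hz]
      have h1 : ContinuousAt (fun p : (F × ℝ) × unitInterval => ((p.1.1, p.1.2 - A p.2) : F × ℝ))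
          (⟨⟨x₀, t₀⟩, s₀⟩ : (F × ℝ) × unitInterval) :=
        ContinuousAt.prodMk (continuousAt_fst.fst) (continuousAt_fst.snd.sub (hAcont.comp_of_eq continuousAt_snd rfl))
      have hf : ContinuousAt (fun p : (F × ℝ) × unitInterval => h (p.1.1, p.1.2 - A p.2))
          (⟨⟨x₀, t₀⟩, s₀⟩ : (F × ℝ) × unitInterval) :=
        (h.continuous.continuousAt).comp h1
      have hGcont : ContinuousAt G (⟨⟨x₀, t₀⟩, s₀⟩ : (F × ℝ) × unitInterval) :=
        ContinuousAt.prodMk (hf.fst) (hf.snd.add (hAcont.comp_of_eq continuousAt_snd rfl))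
      have hV : IsOpen {p : (F × ℝ) × unitInterval | p.2.1 < 1} :=
        isOpen_lt (continuous_subtype_val.comp continuous_snd) continuous_const
      have hev : G =ᶠ[𝓝 (⟨⟨x₀, t₀⟩, s₀⟩ : (F × ℝ) × unitInterval)] H := by
        refine Filter.eventuallyEq_of_mem (hV.mem_nhds hlt) ?_
        rintro ⟨⟨x, t⟩, s⟩ hp
        have hne : ¬ (s : ℝ) = 1 := ne_of_lt hp
        simp only [hG, hHdef]
        rw [if_neg hne]
      exact hGcont.congr hev
  · -- each time is a homeomorphism
    intro s
    by_cases hs : s.1 = 1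
    · exact ⟨Homeomorph.refl _, fun z => by simp only [hHdef]; rw [if_pos hs]; rfl⟩
    · refine ⟨(Homeomorph.prodCongr (Homeomorph.refl F) (Homeomorph.addRight (-(A s)))).trans
        (h.trans (Homeomorph.prodCongr (Homeomorph.refl F) (Homeomorph.addRight (A s)))), ?_⟩
      rintro ⟨x, t⟩
      have hs' : s ≠ 1 := fun he => hs (by rw [he]; rfl)
      simp [hHdef, hs, hs', sub_eq_add_neg, Prod.map]
  · -- H at 0 is h
    rintro ⟨x, t⟩
    have : ((0 : unitInterval) : ℝ) ≠ 1 := by norm_num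
    simp [hHdef, this, hA0]
  · -- H at 1 is id
    rintro ⟨x, t⟩
    simp [hHdef]
  · -- bound
    rintro ⟨x, t⟩ s
    by_cases hs : s.1 = 1
    · simp only [hHdef, hs, if_true]
      simpa using hc.le
    · simp only [hHdef, hs, if_false]
      have key : (h (x, t - A s)).2 + A s - t = (h (x, t - A s)).2 - (t - A s) := by ring
      rw [key]
      exact hbc (x, t - A s)
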